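/- (Orlicz interpolation of intermediate derivatives, 1-D base case) Let φ be an N-function satisfying the Δ₂-condition. Then there exists C = C(Δ₂(φ)) > 0 such that for every δ > 0 and every f ∈ C²([0,δ]): φ(|f'(0)|) ≤ (C/δ) ∫₀^δ φ(δ⁻¹ |f(t)|) + φ(δ |f''(t)|) dt. -/

import Mathlib

open MeasureTheory Filter Set

/-- An N-function: increasing, continuous, convex on `[0,∞)`, vanishing exactly at `0`,
with `φ(t)/t → 0` at `0` and `φ(t)/t → ∞` at `∞`. -/
structure IsNFunction (φ : ℝ → ℝ) : Prop where
  mono : StrictMonoOn φ (Ici 0)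
  cont : ContinuousOn φ (Ici 0)
  convex : ConvexOn ℝ (Ici 0) φ
  zero_iff : ∀ t ∈ Ici (0:ℝ), (φ t = 0 ↔ t = 0)
  tendsto_zero : Tendsto (fun t => φ t / t) (nhdsWithin 0 (Ioi 0)) (nhds 0)
  tendsto_top : Tendsto (fun t => φ t / t) atTop atTop


/-- Orlicz interpolation, 1-D base case: for an N-function `φ` with Δ₂-constant `CΔ`,
there is `C = C(Δ₂(φ))` such that for every `δ > 0` and every `f ∈ C²([0,δ])`,
`φ(|f'(0)|) ≤ (C/δ) ∫₀^δ φ(δ⁻¹|f(t)|) + φ(δ|f''(t)|) dt`. -/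
theorem orlicz_interpolation_1d (φ : ℝ → ℝ) (CΔ : ℝ) (hφ : IsNFunction φ)
    (hCΔ : 1 ≤ CΔ) (hΔ₂ : ∀ t ≥ (0:ℝ), φ (2 * t) ≤ CΔ * φ t) :
    ∃ C > (0:ℝ), ∀ (δ : ℝ), 0 < δ → ∀ f : ℝ → ℝ, ContDiffOn ℝ 2 f (Icc 0 δ) →
      φ |iteratedDerivWithin 1 f (Icc 0 δ) 0| ≤
        (C / δ) * ∫ t in (0:ℝ)..δ,
          (φ (δ⁻¹ * |f t|) + φ (δ * |iteratedDerivWithin 2 f (Icc 0 δ) t|)) := by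
  have hCΔ0 : (0:ℝ) < CΔ := lt_of_lt_of_le one_pos hCΔ
  -- basic facts about φ
  have hφ0 : φ 0 = 0 := (hφ.zero_iff 0 (mem_Ici.2 le_rfl)).2 rfl
  have hmono : MonotoneOn φ (Ici 0) := hφ.mono.monotoneOn
  have hφnn : ∀ t, 0 ≤ t → 0 ≤ φ t := fun t ht => hφ0 ▸ hmono (mem_Ici.2 le_rfl) (mem_Ici.2 ht) ht
  have hadd : ∀ x y : ℝ, 0 ≤ x → 0 ≤ y → φ (x + y) ≤ CΔ * (φ x + φ y) := by
    intro x y hx hy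
    rcases le_total x y with h | h
    · have h1 : φ (x + y) ≤ φ (2 * y) := hmono (mem_Ici.2 (by positivity)) (mem_Ici.2 (by positivity)) (by linarith)
      have h2 := hΔ₂ y hy
      have := hφnn x hx
      nlinarith
    · have h1 : φ (x + y) ≤ φ (2 * x) := hmono (mem_Ici.2 (by positivity)) (mem_Ici.2 (by positivity)) (by linarith)
      have h2 := hΔ₂ x hx
      have := hφnn y hy
      nlinarith
  have h3 : ∀ u : ℝ, 0 ≤ u → φ (3 * u) ≤ CΔ ^ 2 * φ u := by
    intro u hu
    have h1 : φ (3 * u) ≤ φ (2 * (2 * u)) :=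
      hmono (mem_Ici.2 (by positivity)) (mem_Ici.2 (by positivity)) (by linarith)
    have h2 := hΔ₂ (2 * u) (by positivity)
    have h4 := hΔ₂ u hu
    nlinarith
  refine ⟨9 * CΔ ^ 4, by positivity, ?_⟩
  intro δ hδ f hf
  have hs : UniqueDiffOn ℝ (Icc (0:ℝ) δ) := uniqueDiffOn_Icc hδ
  set s := Icc (0:ℝ) δ with hsdef
  set f1 := iteratedDerivWithin 1 f s with hf1def
  set f2 := iteratedDerivWithin 2 f s with hf2def
  have h1cont : ContinuousOn f1 s := hf.continuousOn_iteratedDerivWithin (by norm_num) hs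
  have h2cont : ContinuousOn f2 s := hf.continuousOn_iteratedDerivWithin (by norm_num) hs
  have hfcont : ContinuousOn f s := hf.continuousOn
  have hderiv1 : ∀ x ∈ s, HasDerivWithinAt f1 (f2 x) s x := by
    intro x hx
    have hd : DifferentiableOn ℝ f1 s := hf.differentiableOn_iteratedDerivWithin (by norm_num) hs
    have := (hd x hx).hasDerivWithinAt
    rwa [hf2def, show (2:ℕ) = 1 + 1 from rfl, iteratedDerivWithin_succ]
  have hderiv0 : ∀ x ∈ s, HasDerivWithinAt f (f1 x) s x := by
    intro x hx
    have hd : DifferentiableOn ℝ f s := hf.differentiableOn (by norm_num)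
    have := (hd x hx).hasDerivWithinAt
    rwa [hf1def, iteratedDerivWithin_one]
  have ftc : ∀ G g : ℝ → ℝ, ContinuousOn G s → ContinuousOn g s →
      (∀ x ∈ s, HasDerivWithinAt G (g x) s x) →
      ∀ a b : ℝ, 0 ≤ a → a ≤ b → b ≤ δ → ∫ x in a..b, g x = G b - G a := by
    intro G g hG hg hGg a b ha hab hbδ
    have hsub : Icc a b ⊆ s := Icc_subset_Icc ha hbδ
    apply intervalIntegral.integral_eq_sub_of_hasDeriv_right_of_le hab (hG.mono hsub)
    · intro x hx
      have hxs : x ∈ s := hsub (Ioo_subset_Icc_self hx)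
      have hmem : s ∈ nhds x := Icc_mem_nhds (lt_of_le_of_lt ha hx.1) (lt_of_lt_of_le hx.2 hbδ)
      exact ((hGg x hxs).hasDerivAt hmem).hasDerivWithinAt
    · exact (hg.mono (by rw [uIcc_of_le hab]; exact hsub)).intervalIntegrable
  -- min points
  obtain ⟨t₁, ht₁mem, ht₁min⟩ := (isCompact_Icc :
    IsCompact (Icc (0:ℝ) (δ/3))).exists_isMinOn (nonempty_Icc.2 (by positivity))
    ((hfcont.mono (Icc_subset_Icc le_rfl (by linarith))).abs)
  obtain ⟨t₂, ht₂mem, ht₂min⟩ := (isCompact_Icc :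
    IsCompact (Icc (2*δ/3) δ)).exists_isMinOn
    (nonempty_Icc.2 (show 2*δ/3 ≤ δ by linarith))
    ((hfcont.mono (Icc_subset_Icc (by positivity) le_rfl)).abs)
  have ht₁s : t₁ ∈ s := ⟨ht₁mem.1, le_trans ht₁mem.2 (by linarith)⟩
  have ht₂s : t₂ ∈ s := ⟨le_trans (by positivity) ht₂mem.1, ht₂mem.2⟩
  have hlen : δ/3 ≤ t₂ - t₁ := by
    have := ht₁mem.2; have := ht₂mem.1; linarith
  set K := ∫ x in (0:ℝ)..δ, |f2 x| with hKdef
  have habs2 : ContinuousOn (fun x => |f2 x|) s := h2cont.abs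
  have hint2 : IntervalIntegrable (fun x => |f2 x|) volume 0 δ :=
    (habs2.mono (by rw [uIcc_of_le hδ.le])).intervalIntegrable
  have hK0 : 0 ≤ K := intervalIntegral.integral_nonneg hδ.le (fun x _ => abs_nonneg _)
  -- claim A
  have claimA : ∀ x ∈ s, |f1 x - f1 0| ≤ K := by
    intro x hx
    have h1 : ∫ y in (0:ℝ)..x, f2 y = f1 x - f1 0 :=
      ftc f1 f2 h1cont h2cont hderiv1 0 x le_rfl hx.1 hx.2
    rw [← h1]
    calc |∫ y in (0:ℝ)..x, f2 y| ≤ ∫ y in (0:ℝ)..x, |f2 y| :=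
          intervalIntegral.abs_integral_le_integral_abs hx.1
      _ ≤ K := intervalIntegral.integral_mono_interval le_rfl hx.1 hx.2
          (.of_forall fun y => abs_nonneg _) hint2
  -- claim B (key pointwise estimate)
  have hft : f t₂ - f t₁ = ∫ x in t₁..t₂, f1 x :=
    (ftc f f1 hfcont h1cont hderiv0 t₁ t₂ ht₁s.1 (by linarith) ht₂s.2).symm
  have hsub12 : Icc t₁ t₂ ⊆ s := Icc_subset_Icc ht₁s.1 ht₂s.2
  have key : |f1 0| ≤ 3/δ * |f t₁| + 3/δ * |f t₂| + K := by
    have hL : 0 < t₂ - t₁ := lt_of_lt_of_le (by positivity) hlen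
    have e1 : ∫ x in t₁..t₂, (f1 x - f1 0) = (f t₂ - f t₁) - (t₂ - t₁) * f1 0 := by
      rw [intervalIntegral.integral_sub ((((h1cont.mono hsub12)).mono
        (by rw [uIcc_of_le (by linarith)] : uIcc t₁ t₂ ⊆ Icc t₁ t₂)).intervalIntegrable)
        intervalIntegrable_const, hft, intervalIntegral.integral_const, smul_eq_mul]
    have e2 : |∫ x in t₁..t₂, (f1 x - f1 0)| ≤ K * |t₂ - t₁| := by
      rw [show |∫ x in t₁..t₂, (f1 x - f1 0)| = ‖∫ x in t₁..t₂, (f1 x - f1 0)‖ from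
        (Real.norm_eq_abs _).symm]
      apply intervalIntegral.norm_integral_le_of_norm_le_const
      intro x hx
      have hxs : x ∈ s := hsub12 (by
        rw [uIoc_of_le (by linarith)] at hx; exact Ioc_subset_Icc_self hx)
      simpa using claimA x hxs
    have e3 : |f1 0| * (t₂ - t₁) ≤ |f t₁| + |f t₂| + K * (t₂ - t₁) := by
      have : |(t₂ - t₁) * f1 0| ≤ |f t₂ - f t₁| + K * |t₂ - t₁| := by
        calc |(t₂ - t₁) * f1 0| = |(f t₂ - f t₁) - ((f t₂ - f t₁) - (t₂ - t₁) * f1 0)| := by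
              ring_nf
          _ ≤ |f t₂ - f t₁| + |(f t₂ - f t₁) - (t₂ - t₁) * f1 0| := abs_sub _ _
          _ ≤ |f t₂ - f t₁| + K * |t₂ - t₁| := by rw [← e1]; exact add_le_add le_rfl e2
      rw [abs_mul, abs_of_pos hL] at this
      have habs : |f t₂ - f t₁| ≤ |f t₂| + |f t₁| := abs_sub _ _
      nlinarith [abs_nonneg (f1 0)]
    have hS : (0:ℝ) ≤ |f t₁| + |f t₂| := by positivity
    have d1 : |f1 0| - K ≤ (|f t₁| + |f t₂|) / (t₂ - t₁) := by
      rw [le_div_iff₀ hL]; nlinarith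
    have d2 : (|f t₁| + |f t₂|) / (t₂ - t₁) ≤ (|f t₁| + |f t₂|) / (δ/3) :=
      div_le_div_of_nonneg_left hS (by positivity) hlen
    have : (|f t₁| + |f t₂|) / (δ/3) = 3/δ * |f t₁| + 3/δ * |f t₂| := by
      field_simp
    linarith
  -- abbreviations
  set u₁ := δ⁻¹ * |f t₁| with hu₁def
  set u₂ := δ⁻¹ * |f t₂| with hu₂def
  have hu₁0 : 0 ≤ u₁ := by positivity
  have hu₂0 : 0 ≤ u₂ := by positivity
  -- integrands
  have hg1cont : ContinuousOn (fun t => φ (δ⁻¹ * |f t|)) s := by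
    apply hφ.cont.comp ((continuousOn_const.mul hfcont.abs))
    intro t _; exact mem_Ici.2 (mul_nonneg (inv_nonneg.2 hδ.le) (abs_nonneg _))
  have hg2cont : ContinuousOn (fun t => φ (δ * |f2 t|)) s := by
    apply hφ.cont.comp ((continuousOn_const.mul habs2))
    intro t _; exact mem_Ici.2 (mul_nonneg hδ.le (abs_nonneg _))
  have hg1int : IntervalIntegrable (fun t => φ (δ⁻¹ * |f t|)) volume 0 δ :=
    (hg1cont.mono (by rw [uIcc_of_le hδ.le])).intervalIntegrable
  have hg2int : IntervalIntegrable (fun t => φ (δ * |f2 t|)) volume 0 δ :=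
    (hg2cont.mono (by rw [uIcc_of_le hδ.le])).intervalIntegrable
  set J1 := ∫ t in (0:ℝ)..δ, φ (δ⁻¹ * |f t|) with hJ1def
  set J2 := ∫ t in (0:ℝ)..δ, φ (δ * |f2 t|) with hJ2def
  have hJ1nn : 0 ≤ J1 := intervalIntegral.integral_nonneg hδ.le
    (fun x _ => hφnn _ (by positivity))
  have hJ2nn : 0 ≤ J2 := intervalIntegral.integral_nonneg hδ.le
    (fun x _ => hφnn _ (by positivity))
  -- step: φ u₁ ≤ (3/δ) * J1  and  φ u₂ ≤ (3/δ) * J1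
  have hminbound : ∀ (a b : ℝ) (t0 : ℝ), 0 ≤ a → b - a = δ/3 → a ≤ b → b ≤ δ →
      (∀ x ∈ Icc a b, φ (δ⁻¹ * |f t0|) ≤ φ (δ⁻¹ * |f x|)) → 0 ≤ |f t0| →
      φ (δ⁻¹ * |f t0|) ≤ 3/δ * J1 := by
    intro a b t0 ha hba hab hbδ hmin _
    have hsub : Icc a b ⊆ s := Icc_subset_Icc ha hbδ
    have hci : IntervalIntegrable (fun t => φ (δ⁻¹ * |f t|)) volume a b :=
      ((hg1cont.mono hsub).mono (by rw [uIcc_of_le hab])).intervalIntegrable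
    have h1 : φ (δ⁻¹ * |f t0|) * (δ/3) ≤ ∫ x in a..b, φ (δ⁻¹ * |f x|) := by
      have := intervalIntegral.integral_mono_on hab intervalIntegrable_const hci hmin
      rwa [intervalIntegral.integral_const, hba, smul_eq_mul, mul_comm] at this
    have h2 : (∫ x in a..b, φ (δ⁻¹ * |f x|)) ≤ J1 :=
      intervalIntegral.integral_mono_interval ha hab hbδ
        (.of_forall fun y => hφnn _ (by positivity)) hg1int
    have h3δ : (0:ℝ) < δ/3 := by positivity
    have hle : φ (δ⁻¹ * |f t0|) ≤ J1 / (δ/3) := (le_div_iff₀ h3δ).2 (by linarith)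
    have heq : J1 / (δ/3) = 3/δ * J1 := by
      rw [div_div_eq_mul_div]; ring
    linarith
  have hb1 : φ u₁ ≤ 3/δ * J1 := by
    apply hminbound 0 (δ/3) t₁ le_rfl (by ring) (by positivity) (by linarith)
    · intro x hx
      have hxs : x ∈ s := Icc_subset_Icc le_rfl (by linarith) hx
      exact hmono (mem_Ici.2 (by positivity)) (mem_Ici.2 (by positivity))
        (mul_le_mul_of_nonneg_left (ht₁min hx) (by positivity))
    · exact abs_nonneg _
  have hb2 : φ u₂ ≤ 3/δ * J1 := by
    apply hminbound (2*δ/3) δ t₂ (by positivity) (by ring) (by linarith) le_rfl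
    · intro x hx
      exact hmono (mem_Ici.2 (by positivity)) (mem_Ici.2 (by positivity))
        (mul_le_mul_of_nonneg_left (ht₂min hx) (by positivity))
    · exact abs_nonneg _
  -- Jensen: φ K ≤ (1/δ) * J2
  have hjensen : φ K ≤ 1/δ * J2 := by
    have h0 : volume (Ioc (0:ℝ) δ) ≠ 0 := by
      rw [Real.volume_Ioc]; simp [hδ, ENNReal.ofReal_eq_zero]
    have htop : volume (Ioc (0:ℝ) δ) ≠ ⊤ := by
      rw [Real.volume_Ioc]; exact ENNReal.ofReal_ne_top
    have hfi : IntegrableOn (fun x => δ * |f2 x|) (Ioc 0 δ) volume := by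
      apply (ContinuousOn.integrableOn_Icc (continuousOn_const.mul habs2)).mono_set
        Ioc_subset_Icc_self
    have hgi : IntegrableOn (φ ∘ fun x => δ * |f2 x|) (Ioc 0 δ) volume := by
      apply (ContinuousOn.integrableOn_Icc hg2cont).mono_set Ioc_subset_Icc_self
    have hfs : ∀ᵐ x ∂(volume.restrict (Ioc (0:ℝ) δ)), δ * |f2 x| ∈ Ici (0:ℝ) :=
      .of_forall fun x => mul_nonneg hδ.le (abs_nonneg _)
    have hJ := hφ.convex.map_set_average_le hφ.cont isClosed_Ici h0 htop hfs hfi hgi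
    have hvol : (volume (Ioc (0:ℝ) δ)).toReal = δ := by
      rw [Real.volume_Ioc]; simp [ENNReal.toReal_ofReal hδ.le]
    have havg1 : ⨍ x in Ioc (0:ℝ) δ, (δ * |f2 x|) = K := by
      rw [setAverage_eq, measureReal_def, hvol, smul_eq_mul]
      rw [MeasureTheory.integral_const_mul]
      rw [hKdef, intervalIntegral.integral_of_le hδ.le]
      field_simp
    have havg2 : ⨍ x in Ioc (0:ℝ) δ, (φ ∘ fun x => δ * |f2 x|) x = 1/δ * J2 := by
      rw [setAverage_eq, measureReal_def, hvol, smul_eq_mul, hJ2def, intervalIntegral.integral_of_le hδ.le]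
      rw [one_div]
      rfl
    rw [havg1] at hJ
    calc φ K ≤ ⨍ x in Ioc (0:ℝ) δ, (φ ∘ fun x => δ * |f2 x|) x := hJ
      _ = 1/δ * J2 := havg2
  -- combine
  have hchain : φ |f1 0| ≤ CΔ * φ (3 * u₁) + CΔ^2 * (φ (3 * u₂) + φ K) := by
    have harg : |f1 0| ≤ 3 * u₁ + (3 * u₂ + K) := by
      rw [hu₁def, hu₂def]
      have e : 3 * (δ⁻¹ * |f t₁|) = 3/δ * |f t₁| := by field_simp
      have e' : 3 * (δ⁻¹ * |f t₂|) = 3/δ * |f t₂| := by field_simp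
      rw [e, e']; linarith
    have h0 : φ |f1 0| ≤ φ (3 * u₁ + (3 * u₂ + K)) :=
      hmono (mem_Ici.2 (abs_nonneg _)) (mem_Ici.2 (by positivity)) harg
    have h1 : φ (3 * u₁ + (3 * u₂ + K)) ≤ CΔ * (φ (3 * u₁) + φ (3 * u₂ + K)) :=
      hadd _ _ (by positivity) (by positivity)
    have h2 : φ (3 * u₂ + K) ≤ CΔ * (φ (3 * u₂) + φ K) :=
      hadd _ _ (by positivity) hK0
    have h2' : CΔ * φ (3 * u₂ + K) ≤ CΔ * (CΔ * (φ (3 * u₂) + φ K)) :=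
      mul_le_mul_of_nonneg_left h2 hCΔ0.le
    calc φ |f1 0| ≤ CΔ * (φ (3 * u₁) + φ (3 * u₂ + K)) := h0.trans h1
      _ = CΔ * φ (3 * u₁) + CΔ * φ (3 * u₂ + K) := by ring
      _ ≤ CΔ * φ (3 * u₁) + CΔ * (CΔ * (φ (3 * u₂) + φ K)) := by linarith
      _ = CΔ * φ (3 * u₁) + CΔ^2 * (φ (3 * u₂) + φ K) := by ring
  have h31 : φ (3 * u₁) ≤ CΔ^2 * (3/δ * J1) :=
    le_trans (h3 u₁ hu₁0) (mul_le_mul_of_nonneg_left hb1 (by positivity))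
  have h32 : φ (3 * u₂) ≤ CΔ^2 * (3/δ * J1) :=
    le_trans (h3 u₂ hu₂0) (mul_le_mul_of_nonneg_left hb2 (by positivity))
  have hsum : ∫ t in (0:ℝ)..δ, (φ (δ⁻¹ * |f t|) + φ (δ * |f2 t|)) = J1 + J2 :=
    intervalIntegral.integral_add hg1int hg2int
  clear_value f1 f2 K J1 J2 u₁ u₂
  have hfinal : φ |f1 0| ≤ (9 * CΔ^4 / δ) * (J1 + J2) := by
    have hA : 0 ≤ J1 / δ := by positivity
    have hB : 0 ≤ J2 / δ := by positivity
    have hc3 : CΔ^3 ≤ CΔ^4 := pow_le_pow_right₀ hCΔ (by norm_num)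
    have hc2 : CΔ^2 ≤ CΔ^4 := pow_le_pow_right₀ hCΔ (by norm_num)
    have q1 : CΔ * (CΔ^2 * (3/δ * J1)) = 3 * CΔ^3 * (J1/δ) := by ring
    have q2 : CΔ^2 * (CΔ^2 * (3/δ * J1)) = 3 * CΔ^4 * (J1/δ) := by ring
    have q3 : CΔ^2 * (1/δ * J2) = CΔ^2 * (J2/δ) := by ring
    have r1 : CΔ * φ (3 * u₁) ≤ 3 * CΔ^3 * (J1/δ) := by
      rw [← q1]; exact mul_le_mul_of_nonneg_left h31 hCΔ0.le
    have r2 : CΔ^2 * φ (3 * u₂) ≤ 3 * CΔ^4 * (J1/δ) := by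
      rw [← q2]; exact mul_le_mul_of_nonneg_left h32 (by positivity)
    have r3 : CΔ^2 * φ K ≤ CΔ^2 * (J2/δ) := by
      rw [← q3]; exact mul_le_mul_of_nonneg_left hjensen (by positivity)
    have m1 : CΔ^3 * (J1/δ) ≤ CΔ^4 * (J1/δ) := mul_le_mul_of_nonneg_right hc3 hA
    have m2 : CΔ^2 * (J2/δ) ≤ CΔ^4 * (J2/δ) := mul_le_mul_of_nonneg_right hc2 hB
    have m3 : 0 ≤ CΔ^4 * (J1/δ) := by positivity
    have m4 : 0 ≤ CΔ^4 * (J2/δ) := by positivity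
    have expand : (9 * CΔ^4 / δ) * (J1 + J2) = 9 * (CΔ^4 * (J1/δ)) + 9 * (CΔ^4 * (J2/δ)) := by
      ring
    have hsplit : φ (3 * u₂) + φ K ≤ φ (3 * u₂) + φ K := le_rfl
    have hch : φ |f1 0| ≤ CΔ * φ (3 * u₁) + (CΔ^2 * φ (3 * u₂) + CΔ^2 * φ K) := by
      calc φ |f1 0| ≤ CΔ * φ (3 * u₁) + CΔ^2 * (φ (3 * u₂) + φ K) := hchain
        _ = CΔ * φ (3 * u₁) + (CΔ^2 * φ (3 * u₂) + CΔ^2 * φ K) := by ring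
    rw [expand]
    linarith
  calc φ |f1 0| ≤ (9 * CΔ^4 / δ) * (J1 + J2) := hfinal
    _ = (9 * CΔ^4 / δ) * ∫ t in (0:ℝ)..δ, (φ (δ⁻¹ * |f t|) + φ (δ * |f2 t|)) := by rw [hsum]
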